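/- arXiv:1606.09155 — 2 statements merged into one kernel-verified Lean document; each statement's English description precedes it below -/
import Mathlib

section
/- Let μ_g, μ_h ≥ 0 with μ_g + μ_h > 0, let L_h ≥ μ_h, and let Q be a self-adjoint operator on a finite-dimensional real inner product space with (μ_g + μ_h)/2·I − Q positive semidefinite. Set k₀ = ⌈1 + 2(L_h − μ_h)/(μ_g + μ_h)⌉. Then for every integer k ≥ 1, the operator (k + k₀)(k Q + (L_h + μ_g)·I) − (k + k₀ + 1)((k+1) Q + (L_h − μ_h)·I) is positive semidefinite. -/
open scoped RealInnerProductSpace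

/-- With `k₀ = ⌈1 + 2(L_h − μ_h)/(μ_g + μ_h)⌉` and `Q ⪯ ((μ_g + μ_h)/2)·I`,
for every `k ≥ 1` the operator
`(k + k₀)(k Q + (L_h + μ_g)·I) − (k + k₀ + 1)((k+1) Q + (L_h − μ_h)·I)`
is positive semidefinite (Proposition 2.12 in the paper). -/
theorem stmt_12 {Z : Type*}
    [NormedAddCommGroup Z] [InnerProductSpace ℝ Z] [FiniteDimensional ℝ Z]
    (μg μh Lh : ℝ) (hμg : 0 ≤ μg) (hμh : 0 ≤ μh) (hμ : 0 < μg + μh) (hL : μh ≤ Lh)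
    (Q : Z →L[ℝ] Z) (hQ : IsSelfAdjoint Q)
    (hQup : ∀ v : Z, ⟪v, Q v⟫ ≤ (μg + μh) / 2 * ‖v‖ ^ 2)
    (k0 : ℤ) (hk0 : k0 = ⌈(1 : ℝ) + 2 * (Lh - μh) / (μg + μh)⌉) :
    ∀ k : ℕ, 1 ≤ k → ∀ v : Z,
      0 ≤ ((k : ℝ) + (k0 : ℝ)) * ((k : ℝ) * ⟪v, Q v⟫ + (Lh + μg) * ‖v‖ ^ 2)
          - ((k : ℝ) + (k0 : ℝ) + 1) * (((k : ℝ) + 1) * ⟪v, Q v⟫ + (Lh - μh) * ‖v‖ ^ 2) := by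
  intro k hk v
  have hq := hQup v
  have hn : (0:ℝ) ≤ ‖v‖ ^ 2 := sq_nonneg _
  have hk0ge : (1 : ℝ) + 2 * (Lh - μh) / (μg + μh) ≤ (k0 : ℝ) := by
    rw [hk0]; exact_mod_cast Int.le_ceil _
  have hdiv : (0:ℝ) ≤ 2 * (Lh - μh) / (μg + μh) :=
    div_nonneg (by linarith) hμ.le
  have hk0one : (1 : ℝ) ≤ (k0 : ℝ) := by linarith
  have hkey : 2 * (Lh - μh) ≤ ((k0 : ℝ) - 1) * (μg + μh) := by
    rw [← div_le_iff₀ hμ] at *; linarith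
  have hk1 : (1:ℝ) ≤ (k : ℝ) := by exact_mod_cast hk
  nlinarith [mul_le_mul_of_nonneg_left hq (by linarith : (0:ℝ) ≤ 2*(k:ℝ) + (k0:ℝ) + 1),
    mul_nonneg hn (by linarith : (0:ℝ) ≤ ((k0:ℝ)-1)*(μg+μh) - 2*(Lh-μh))]
end

section
/- (Per-iteration bound for accelerated linearized ADMM.) Let γ > 0, η ≥ 1, let P be self-adjoint positive semidefinite on Y, and let Q be a self-adjoint operator on Z with ηγ·C*C ⪯ Q ⪯ ((μ_g + μ_h)/2)·I. Fix k ≥ 1 and set β_k = γ_k = (k+1)γ, Pᵏ = P/(k+1), Qᵏ = (k+1)(Q − γ C*C) + L_h·I. Given yᵏ, zᵏ, λᵏ, suppose: there is a subgradient u of f at y^{k+1} with u − B*λᵏ + β_k B*(B y^{k+1} + C zᵏ − b) + Pᵏ(y^{k+1} − yᵏ) = 0; there is a subgradient v of g at z^{k+1} with v + ∇h(zᵏ) − C*λᵏ + β_k C*(B y^{k+1} + C z^{k+1} − b) + Qᵏ(z^{k+1} − zᵏ) = 0; and λ^{k+1} = λᵏ − γ_k(B y^{k+1} + C z^{k+1}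 − b). Then for every (y, z) with B y + C z = b and every λ ∈ H: F(y^{k+1}, z^{k+1}) − F(y, z) − ⟨λ, B y^{k+1} + C z^{k+1} − b⟩ ≤ −(1/(2γ(k+1)))[‖λ − λ^{k+1}‖² − ‖λ − λᵏ‖²] − ((η−1)/(2ηγ(k+1)))‖λᵏ − λ^{k+1}‖² − (1/(2(k+1)))[‖y^{k+1} − y‖²_P − ‖yᵏ − y‖²_P + ‖y^{k+1} − yᵏ‖²_P] − ½((k+1)‖z^{k+1} − z‖²_Q + (L_h + μ_g)‖z^{k+1} − z‖²) + ½((k+1)‖zᵏ − z‖²_Q + (L_h − μ_h)‖zᵏ − z‖²). -/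
open scoped RealInnerProductSpace



section Aux
variable {E : Type*} [NormedAddCommGroup E] [InnerProductSpace ℝ E]

/-- polarization identity for a symmetric operator -/
lemma polar_op (T : E →L[ℝ] E) (hT : ∀ a c : E, ⟪T a, c⟫ = ⟪a, T c⟫) (x1 x0 w : E) :
    ⟪T (x1 - x0), w - x1⟫ =
      (⟪x0 - w, T (x0 - w)⟫ - ⟪x1 - w, T (x1 - w)⟫ - ⟪x1 - x0, T (x1 - x0)⟫) / 2 := by
  simp only [map_sub, inner_sub_left, inner_sub_right]
  linarith [hT x1 w, hT x0 w, hT x1 x0, hT x0 x1, hT x1 x1, hT x0 x0, hT w w, hT w x1, hT w x0,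
    real_inner_comm x1 (T w), real_inner_comm x0 (T w), real_inner_comm x0 (T x1),
    real_inner_comm w (T x0), real_inner_comm w (T x1), real_inner_comm x1 (T x0),
    real_inner_comm x1 (T x1), real_inner_comm x0 (T x0), real_inner_comm w (T w)]

/-- polarization identity for norms -/
lemma polar_id (a b c : E) :
    ⟪a - b, c - a⟫ = (‖b - c‖ ^ 2 - ‖a - c‖ ^ 2 - ‖a - b‖ ^ 2) / 2 := by
  simp only [inner_sub_left, inner_sub_right]
  linarith [norm_sub_sq_real b c, norm_sub_sq_real a c, norm_sub_sq_real a b,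
    real_inner_comm b a, real_inner_comm b c, real_inner_comm a c,
    real_inner_self_eq_norm_sq a, real_inner_self_eq_norm_sq b, real_inner_self_eq_norm_sq c]

/-- strong convexity upgrade of a subgradient inequality -/
lemma strong_subgrad (φ : E → ℝ) (μ : ℝ) (hμ : 0 ≤ μ)
    (hc : ConvexOn ℝ Set.univ (fun z => φ z - μ / 2 * ‖z‖ ^ 2)) (x v : E)
    (hv : ∀ z : E, φ z ≥ φ x + ⟪v, z - x⟫) (z : E) :
    φ x + ⟪v, z - x⟫ + μ / 2 * ‖z - x‖ ^ 2 ≤ φ z := by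
  have hid : μ / 2 * ‖z - x‖ ^ 2 - μ / 2 * ‖z‖ ^ 2 + μ / 2 * ‖x‖ ^ 2 + μ * ⟪x, z - x⟫ = 0 := by
    have e1 : ‖z - x‖ ^ 2 = ‖z‖ ^ 2 - 2 * ⟪x, z⟫ + ‖x‖ ^ 2 := by
      rw [norm_sub_sq_real, real_inner_comm]
    have e2 : ⟪x, z - x⟫ = ⟪x, z⟫ - ‖x‖ ^ 2 := by
      rw [inner_sub_right, real_inner_self_eq_norm_sq]
    rw [e1, e2]; ring
  have key : ∀ t : ℝ, 0 < t → t ≤ 1 →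
      ⟪v, z - x⟫ - μ * ⟪x, z - x⟫ - μ * t / 2 * ‖z - x‖ ^ 2 ≤
        (φ z - μ / 2 * ‖z‖ ^ 2) - (φ x - μ / 2 * ‖x‖ ^ 2) := by
    intro t ht0 ht1
    have hp : x + t • (z - x) = (1 - t) • x + t • z := by
      rw [sub_smul, one_smul, smul_sub]; abel
    have c1 := hv (x + t • (z - x))
    rw [add_sub_cancel_left, real_inner_smul_right] at c1
    have c2 := hc.2 (Set.mem_univ x) (Set.mem_univ z) (by linarith : (0:ℝ) ≤ 1 - t)
      (le_of_lt ht0) (by ring)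
    rw [← hp] at c2
    simp only [smul_eq_mul] at c2
    have hnorm : ‖x + t • (z - x)‖ ^ 2 = ‖x‖ ^ 2 + 2 * (t * ⟪x, z - x⟫) + t ^ 2 * ‖z - x‖ ^ 2 := by
      rw [norm_add_sq_real, real_inner_smul_right, norm_smul, Real.norm_eq_abs, mul_pow, sq_abs]
    rw [hnorm] at c2
    have c3 : t * (⟪v, z - x⟫ - μ * ⟪x, z - x⟫ - μ * t / 2 * ‖z - x‖ ^ 2) ≤
        t * ((φ z - μ / 2 * ‖z‖ ^ 2) - (φ x - μ / 2 * ‖x‖ ^ 2)) := by nlinarith [c1, c2]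
    exact le_of_mul_le_mul_left c3 ht0
  by_contra hcon
  push_neg at hcon
  set W := μ / 2 * ‖z - x‖ ^ 2 with hW
  have hW0 : 0 ≤ W := by positivity
  set ε := φ x + ⟪v, z - x⟫ + W - φ z with hε
  have hε0 : 0 < ε := by simp only [hε]; linarith
  set t := min 1 (ε / (W + 1)) with ht
  have ht0 : 0 < t := lt_min one_pos (by positivity)
  have ht1 : t ≤ 1 := min_le_left _ _
  have h2 : t * W ≤ ε / (W + 1) * W := mul_le_mul_of_nonneg_right (min_le_right _ _) hW0
  have h3 : ε / (W + 1) * W < ε := by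
    rw [div_mul_eq_mul_div, div_lt_iff₀ (by positivity)]
    nlinarith [hε0, hW0]
  have hk := key t ht0 ht1
  -- combine: φ x + ⟪v,z-x⟫ + W ≤ φ z + t*W ≤ φ z + ε = φ x + ⟪v,z-x⟫ + W : contradiction
  have : μ * t / 2 * ‖z - x‖ ^ 2 = t * W := by rw [hW]; ring
  linarith [hk, hid, h2, h3]

end Aux


section Grad
variable {E : Type*} [NormedAddCommGroup E] [InnerProductSpace ℝ E] [CompleteSpace E]

lemma hasGradientAt_const_mul_normsq (c : ℝ) (p : E) :
    HasGradientAt (fun q : E => c * ‖q‖ ^ 2) ((2 * c) • p) p := by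
  have h1 : HasFDerivAt (fun q : E => (⟪q, q⟫ : ℝ))
      ((fderivInnerCLM ℝ (p, p)).comp ((ContinuousLinearMap.id ℝ E).prod
        (ContinuousLinearMap.id ℝ E))) p :=
    (hasFDerivAt_id p).inner ℝ (hasFDerivAt_id p)
  have h2 := h1.const_mul c
  have heq : (fun q : E => c * (⟪q, q⟫ : ℝ)) = fun q : E => c * ‖q‖ ^ 2 := by
    funext q; rw [real_inner_self_eq_norm_sq]
  rw [heq] at h2
  have hL : c • ((fderivInnerCLM ℝ (p, p)).comp ((ContinuousLinearMap.id ℝ E).prod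
      (ContinuousLinearMap.id ℝ E))) = (InnerProductSpace.toDual ℝ E) ((2 * c) • p) := by
    ext w
    simp only [ContinuousLinearMap.coe_comp', Function.comp_apply, ContinuousLinearMap.smul_apply,
      ContinuousLinearMap.prod_apply, ContinuousLinearMap.coe_id', id_eq, fderivInnerCLM_apply,
      InnerProductSpace.toDual_apply_apply, smul_eq_mul]
    rw [real_inner_smul_left, real_inner_comm]
    ring
  exact hasGradientAt_iff_hasFDerivAt.mpr (hL ▸ h2)

/-- along-the-line derivative of a function with a gradient -/
lemma line_hasDerivAt (φ : E → ℝ) (gφ : E → E) (hg : ∀ p : E, HasGradientAt φ (gφ p) p)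
    (x d : E) (t : ℝ) :
    HasDerivAt (fun s : ℝ => φ (x + s • d)) ⟪gφ (x + t • d), d⟫ t := by
  have hline : HasDerivAt (fun s : ℝ => x + s • d) d t := by
    simpa using ((hasDerivAt_id t).smul_const d).const_add x
  have hf : HasFDerivAt φ ((InnerProductSpace.toDual ℝ E) (gφ (x + t • d))) (x + t • d) :=
    (hg (x + t • d))
  have := hf.comp_hasDerivAt t hline
  simpa [Function.comp_def] using this

/-- gradient inequality given convexity along the segment -/
lemma line_subgrad (φ : E → ℝ) (gφ : E → E) (hg : ∀ p : E, HasGradientAt φ (gφ p) p)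
    (x z : E) (hcl : ConvexOn ℝ Set.univ (fun t : ℝ => φ (x + t • (z - x)))) :
    φ x + ⟪gφ x, z - x⟫ ≤ φ z := by
  have hd0 := line_hasDerivAt φ gφ hg x (z - x) 0
  rw [zero_smul, add_zero] at hd0
  have hs := hcl.le_slope_of_hasDerivAt (Set.mem_univ 0) (Set.mem_univ 1) one_pos hd0
  rw [slope_def_field] at hs
  simp only [zero_smul, add_zero, one_smul, add_sub_cancel, div_one] at hs
  -- hs : ⟪gφ x, z - x⟫ ≤ (φ z - φ x) / (1 - 0)
  have : φ (x + (z - x)) = φ z := by rw [add_sub_cancel]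
  nlinarith [hs]

/-- convexity of line restriction from convexity -/
lemma line_convex (φ : E → ℝ) (hφ : ConvexOn ℝ Set.univ φ) (x z : E) :
    ConvexOn ℝ Set.univ (fun t : ℝ => φ (x + t • (z - x))) := by
  have h := hφ.comp_affineMap (AffineMap.lineMap x z : ℝ →ᵃ[ℝ] E)
  simp only [Set.preimage_univ] at h
  have : (fun t : ℝ => φ (x + t • (z - x))) = φ ∘ (AffineMap.lineMap x z : ℝ →ᵃ[ℝ] E) := by
    funext t
    simp only [Function.comp_apply, AffineMap.lineMap_apply_module]
    congr 1
    module
  rw [this]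
  exact h

/-- convexity of the line restriction given monotone gradient -/
lemma line_convex_of_monotone_grad (φ : E → ℝ) (gφ : E → E)
    (hg : ∀ p : E, HasGradientAt φ (gφ p) p)
    (hmono : ∀ p q : E, 0 ≤ ⟪gφ p - gφ q, p - q⟫) (x z : E) :
    ConvexOn ℝ Set.univ (fun t : ℝ => φ (x + t • (z - x))) := by
  set d := z - x with hd
  have hdiff : Differentiable ℝ (fun s : ℝ => φ (x + s • d)) := fun t =>
    (line_hasDerivAt φ gφ hg x d t).differentiableAt
  apply Monotone.convexOn_univ_of_deriv hdiff
  intro s t hst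
  rw [(line_hasDerivAt φ gφ hg x d s).deriv, (line_hasDerivAt φ gφ hg x d t).deriv]
  rcases eq_or_lt_of_le hst with rfl | hst
  · exact le_rfl
  have h1 := hmono (x + t • d) (x + s • d)
  have h2 : (x + t • d) - (x + s • d) = (t - s) • d := by
    rw [sub_smul]; abel
  rw [h2, real_inner_smul_right, inner_sub_left] at h1
  nlinarith [h1, hst]

end Grad


section Descent
variable {E : Type*} [NormedAddCommGroup E] [InnerProductSpace ℝ E] [CompleteSpace E]

lemma normsq_expand_aux (c : ℝ) (x z : E) :
    c * ‖z - x‖ ^ 2 - c * ‖z‖ ^ 2 + c * ‖x‖ ^ 2 + 2 * c * ⟪x, z - x⟫ = 0 := by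
  have e1 : ‖z - x‖ ^ 2 = ‖z‖ ^ 2 - 2 * ⟪x, z⟫ + ‖x‖ ^ 2 := by
    rw [norm_sub_sq_real, real_inner_comm]
  have e2 : ⟪x, z - x⟫ = ⟪x, z⟫ - ‖x‖ ^ 2 := by
    rw [inner_sub_right, real_inner_self_eq_norm_sq]
  rw [e1, e2]; ring

/-- descent lemma for L-smooth functions -/
lemma descent_lemma (h : E → ℝ) (h' : E → E) (Lh : ℝ) (hLh : 0 ≤ Lh)
    (hgrad : ∀ p : E, HasGradientAt h (h' p) p)
    (hlip : ∀ p q : E, ‖h' p - h' q‖ ≤ Lh * ‖p - q‖) (x z : E) :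
    h z ≤ h x + ⟪h' x, z - x⟫ + Lh / 2 * ‖z - x‖ ^ 2 := by
  set ψ : E → ℝ := fun p => Lh / 2 * ‖p‖ ^ 2 - h p with hψdef
  set gψ : E → E := fun p => Lh • p - h' p with hgψdef
  have hψ : ∀ p : E, HasGradientAt ψ (gψ p) p := by
    intro p
    have h1 := hasGradientAt_const_mul_normsq (Lh / 2) p
    have h2 := hgrad p
    rw [hasGradientAt_iff_hasFDerivAt] at h1 h2 ⊢
    have : (InnerProductSpace.toDual ℝ E) (gψ p) =
        (InnerProductSpace.toDual ℝ E) ((2 * (Lh / 2)) • p) -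
        (InnerProductSpace.toDual ℝ E) (h' p) := by
      rw [← map_sub]; congr 1; simp [hgψdef]; module
    rw [this]
    exact h1.sub h2
  have hmono : ∀ p q : E, 0 ≤ ⟪gψ p - gψ q, p - q⟫ := by
    intro p q
    have he : gψ p - gψ q = Lh • (p - q) - (h' p - h' q) := by simp [hgψdef]; module
    rw [he, inner_sub_left, real_inner_smul_left, real_inner_self_eq_norm_sq]
    have cs := real_inner_le_norm (h' p - h' q) (p - q)
    have hl := mul_le_mul_of_nonneg_right (hlip p q) (norm_nonneg (p - q))
    nlinarith [cs, hl]
  have hkey := line_subgrad ψ gψ hψ x z (line_convex_of_monotone_grad ψ gψ hψ hmono x z)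
  have hexp : ⟪gψ x, z - x⟫ = Lh * ⟪x, z - x⟫ - ⟪h' x, z - x⟫ := by
    simp only [hgψdef, inner_sub_left, real_inner_smul_left]
  rw [hexp] at hkey
  simp only [hψdef] at hkey
  have hid := normsq_expand_aux (Lh / 2) x z
  have : 2 * (Lh / 2) = Lh := by ring
  rw [this] at hid
  linarith [hkey, hid]

/-- convexity of c‖·‖² -/
lemma convexOn_const_mul_normsq (c : ℝ) (hc : 0 ≤ c) :
    ConvexOn ℝ Set.univ (fun z : E => c * ‖z‖ ^ 2) := by
  refine ⟨convex_univ, fun x _ y _ a b ha hb hab => ?_⟩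
  simp only [smul_eq_mul]
  have h1 : ‖a • x + b • y‖ ≤ a * ‖x‖ + b * ‖y‖ := by
    calc ‖a • x + b • y‖ ≤ ‖a • x‖ + ‖b • y‖ := norm_add_le _ _
    _ = a * ‖x‖ + b * ‖y‖ := by
        rw [norm_smul, norm_smul, Real.norm_eq_abs, Real.norm_eq_abs,
          abs_of_nonneg ha, abs_of_nonneg hb]
  have h2 : ‖a • x + b • y‖ ^ 2 ≤ (a * ‖x‖ + b * ‖y‖) ^ 2 :=
    pow_le_pow_left₀ (norm_nonneg _) h1 2
  have h3 : (a * ‖x‖ + b * ‖y‖) ^ 2 ≤ a * ‖x‖ ^ 2 + b * ‖y‖ ^ 2 := by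
    nlinarith [mul_nonneg (mul_nonneg ha hb) (sq_nonneg (‖x‖ - ‖y‖))]
  have h4 := mul_le_mul_of_nonneg_left (h2.trans h3) hc
  nlinarith [h4]

end Descent


set_option maxHeartbeats 1600000

/-- Per-iteration bound for the accelerated linearized ADMM
(Proposition 2.13 in the paper). -/
theorem stmt_13 {Y Z H : Type*}
    [NormedAddCommGroup Y] [InnerProductSpace ℝ Y] [FiniteDimensional ℝ Y]
    [NormedAddCommGroup Z] [InnerProductSpace ℝ Z] [FiniteDimensional ℝ Z]
    [NormedAddCommGroup H] [InnerProductSpace ℝ H] [FiniteDimensional ℝ H]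
    (B : Y →L[ℝ] H) (C : Z →L[ℝ] H) (b : H)
    (f : Y → ℝ) (hf : ConvexOn ℝ Set.univ f)
    (g : Z → ℝ) (μg : ℝ) (hμg : 0 ≤ μg)
    (hg : ConvexOn ℝ Set.univ (fun z => g z - μg / 2 * ‖z‖ ^ 2))
    (h : Z → ℝ) (h' : Z → Z) (Lh μh : ℝ) (hLh : 0 ≤ Lh) (hμh : 0 ≤ μh)
    (hh : ConvexOn ℝ Set.univ (fun z => h z - μh / 2 * ‖z‖ ^ 2))
    (hgrad : ∀ z : Z, HasGradientAt h (h' z) z)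
    (hlip : ∀ z z' : Z, ‖h' z - h' z'‖ ≤ Lh * ‖z - z'‖)
    (hμ : 0 < μg + μh)
    (γ η : ℝ) (hγ : 0 < γ) (hη : 1 ≤ η)
    (P : Y →L[ℝ] Y) (hP : IsSelfAdjoint P) (hPpsd : ∀ v : Y, 0 ≤ ⟪v, P v⟫)
    (Q : Z →L[ℝ] Z) (hQ : IsSelfAdjoint Q)
    (hQlow : ∀ v : Z, η * γ * ‖C v‖ ^ 2 ≤ ⟪v, Q v⟫)
    (hQup : ∀ v : Z, ⟪v, Q v⟫ ≤ (μg + μh) / 2 * ‖v‖ ^ 2)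
    (k : ℕ) (hk : 1 ≤ k)
    (yk : Y) (zk : Z) (lamk : H) (yk1 : Y) (zk1 : Z) (lamk1 : H)
    (hopty : ∃ u : Y,
      (∀ y' : Y, f y' ≥ f yk1 + ⟪u, y' - yk1⟫) ∧
      u - (ContinuousLinearMap.adjoint B) lamk
        + (((k : ℝ) + 1) * γ) • (ContinuousLinearMap.adjoint B) (B yk1 + C zk - b)
        + (((k : ℝ) + 1)⁻¹ • P) (yk1 - yk) = 0)
    (hoptz : ∃ v : Z,
      (∀ z' : Z, g z' ≥ g zk1 + ⟪v, z' - zk1⟫) ∧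
      v + h' zk - (ContinuousLinearMap.adjoint C) lamk
        + (((k : ℝ) + 1) * γ) • (ContinuousLinearMap.adjoint C) (B yk1 + C zk1 - b)
        + ((((k : ℝ) + 1) • (Q - γ • ((ContinuousLinearMap.adjoint C).comp C))
            + Lh • ContinuousLinearMap.id ℝ Z) (zk1 - zk)) = 0)
    (hlam : lamk1 = lamk - (((k : ℝ) + 1) * γ) • (B yk1 + C zk1 - b)) :
    ∀ (y : Y) (z : Z), B y + C z = b → ∀ lam : H,
      (f yk1 + g zk1 + h zk1) - (f y + g z + h z) - ⟪lam, B yk1 + C zk1 - b⟫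
        ≤ -(1 / (2 * γ * ((k : ℝ) + 1))) * (‖lam - lamk1‖ ^ 2 - ‖lam - lamk‖ ^ 2)
          - ((η - 1) / (2 * η * γ * ((k : ℝ) + 1))) * ‖lamk - lamk1‖ ^ 2
          - (1 / (2 * ((k : ℝ) + 1))) * (⟪yk1 - y, P (yk1 - y)⟫ - ⟪yk - y, P (yk - y)⟫
              + ⟪yk1 - yk, P (yk1 - yk)⟫)
          - (1 / 2) * (((k : ℝ) + 1) * ⟪zk1 - z, Q (zk1 - z)⟫ + (Lh + μg) * ‖zk1 - z‖ ^ 2)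
          + (1 / 2) * (((k : ℝ) + 1) * ⟪zk - z, Q (zk - z)⟫ + (Lh - μh) * ‖zk - z‖ ^ 2) := by
  intro y z hfeas lam
  obtain ⟨u, hu, huo⟩ := hopty
  obtain ⟨v, hv, hvo⟩ := hoptz
  have hκ : (0:ℝ) < (k : ℝ) + 1 := by positivity
  have hκ0 : ((k : ℝ) + 1) ≠ 0 := ne_of_gt hκ
  have hγ0 : γ ≠ 0 := ne_of_gt hγ
  have hη0 : (0:ℝ) < η := lt_of_lt_of_le one_pos hη
  have hη0' : η ≠ 0 := ne_of_gt hη0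
  -- self-adjointness as inner swaps
  have hPsw : ∀ a c : Y, ⟪P a, c⟫ = ⟪a, P c⟫ := by
    intro a c
    have hP' := ContinuousLinearMap.isSelfAdjoint_iff'.mp hP
    nth_rewrite 1 [← hP']
    exact ContinuousLinearMap.adjoint_inner_left P c a
  have hQsw : ∀ a c : Z, ⟪Q a, c⟫ = ⟪a, Q c⟫ := by
    intro a c
    have hQ' := ContinuousLinearMap.isSelfAdjoint_iff'.mp hQ
    nth_rewrite 1 [← hQ']
    exact ContinuousLinearMap.adjoint_inner_left Q c a
  -- convexity of h
  have hconvh : ConvexOn ℝ Set.univ h := by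
    have hsum := hh.add (convexOn_const_mul_normsq (E := Z) (μh / 2) (by positivity))
    have he : h = fun p : Z => (h p - μh / 2 * ‖p‖ ^ 2) + μh / 2 * ‖p‖ ^ 2 := by
      funext p; ring
    rw [he]
    exact hsum
  -- function inequalities
  have hfy := hu y
  have hgz := strong_subgrad g μg hμg hg zk1 v hv z
  rw [show ‖z - zk1‖ = ‖zk1 - z‖ from norm_sub_rev _ _] at hgz
  have hsubh : ∀ z' : Z, h z' ≥ h zk + ⟪h' zk, z' - zk⟫ := fun z' =>
    line_subgrad h h' hgrad zk z' (line_convex h hconvh zk z')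
  have hhz := strong_subgrad h μh hμh hh zk (h' zk) hsubh z
  rw [show ‖z - zk‖ = ‖zk - z‖ from norm_sub_rev _ _] at hhz
  have hdesc := descent_lemma h h' Lh hLh hgrad hlip zk zk1
  -- vector identities
  have hBy : B (y - yk1) = -(B yk1 + C zk1 - b) - (C z - C zk1) := by
    rw [map_sub, ← hfeas]; abel
  have hBzk : B yk1 + C zk - b = (B yk1 + C zk1 - b) - C (zk1 - zk) := by
    rw [map_sub]; abel
  -- optimality: solve for u and v
  have hu_eq : u = (ContinuousLinearMap.adjoint B) lamk
      - (((k : ℝ) + 1) * γ) • (ContinuousLinearMap.adjoint B) (B yk1 + C zk - b)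
      - ((k : ℝ) + 1)⁻¹ • (P (yk1 - yk)) := by
    have hsm : (((k : ℝ) + 1)⁻¹ • P) (yk1 - yk) = ((k : ℝ) + 1)⁻¹ • (P (yk1 - yk)) := rfl
    rw [hsm] at huo
    apply eq_of_sub_eq_zero
    calc u - ((ContinuousLinearMap.adjoint B) lamk
        - (((k : ℝ) + 1) * γ) • (ContinuousLinearMap.adjoint B) (B yk1 + C zk - b)
        - ((k : ℝ) + 1)⁻¹ • (P (yk1 - yk)))
        = u - (ContinuousLinearMap.adjoint B) lamk
          + (((k : ℝ) + 1) * γ) • (ContinuousLinearMap.adjoint B) (B yk1 + C zk - b)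
          + ((k : ℝ) + 1)⁻¹ • (P (yk1 - yk)) := by abel
      _ = 0 := huo
  have hv_eq : v = (ContinuousLinearMap.adjoint C) lamk - h' zk
      - (((k : ℝ) + 1) * γ) • (ContinuousLinearMap.adjoint C) (B yk1 + C zk1 - b)
      - ((((k : ℝ) + 1) • (Q - γ • ((ContinuousLinearMap.adjoint C).comp C))
          + Lh • ContinuousLinearMap.id ℝ Z) (zk1 - zk)) := by
    apply eq_of_sub_eq_zero
    calc v - ((ContinuousLinearMap.adjoint C) lamk - h' zk
        - (((k : ℝ) + 1) * γ) • (ContinuousLinearMap.adjoint C) (B yk1 + C zk1 - b)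
        - ((((k : ℝ) + 1) • (Q - γ • ((ContinuousLinearMap.adjoint C).comp C))
            + Lh • ContinuousLinearMap.id ℝ Z) (zk1 - zk)))
        = v + h' zk - (ContinuousLinearMap.adjoint C) lamk
          + (((k : ℝ) + 1) * γ) • (ContinuousLinearMap.adjoint C) (B yk1 + C zk1 - b)
          + ((((k : ℝ) + 1) • (Q - γ • ((ContinuousLinearMap.adjoint C).comp C))
              + Lh • ContinuousLinearMap.id ℝ Z) (zk1 - zk)) := by abel
      _ = 0 := hvo
  -- scalar expansion of the u-optimality
  have hui : ⟪u, y - yk1⟫ =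
      -⟪lamk, B yk1 + C zk1 - b⟫ - ⟪lamk, C z - C zk1⟫
      + ((k : ℝ) + 1) * γ * ⟪B yk1 + C zk1 - b, B yk1 + C zk1 - b⟫
      + ((k : ℝ) + 1) * γ * ⟪B yk1 + C zk1 - b, C z - C zk1⟫
      - ((k : ℝ) + 1) * γ * ⟪C (zk1 - zk), B yk1 + C zk1 - b⟫
      - ((k : ℝ) + 1) * γ * ⟪C (zk1 - zk), C z - C zk1⟫
      - ((k : ℝ) + 1)⁻¹ * ⟪P (yk1 - yk), y - yk1⟫ := by
    rw [hu_eq, inner_sub_left, inner_sub_left, real_inner_smul_left, real_inner_smul_left,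
      ContinuousLinearMap.adjoint_inner_left, ContinuousLinearMap.adjoint_inner_left,
      hBy, hBzk]
    simp only [inner_sub_left, inner_sub_right, inner_neg_left, inner_neg_right]
    ring
  -- expand the Q-operator application
  have hMd : ((((k : ℝ) + 1) • (Q - γ • ((ContinuousLinearMap.adjoint C).comp C))
      + Lh • ContinuousLinearMap.id ℝ Z) (zk1 - zk)) =
      ((k : ℝ) + 1) • (Q (zk1 - zk))
      - (((k : ℝ) + 1) * γ) • ((ContinuousLinearMap.adjoint C) (C (zk1 - zk)))
      + Lh • (zk1 - zk) := by
    simp [ContinuousLinearMap.add_apply, ContinuousLinearMap.smul_apply,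
      ContinuousLinearMap.sub_apply, ContinuousLinearMap.comp_apply,
      ContinuousLinearMap.id_apply, smul_sub, smul_smul]
  have hvi : ⟪v, z - zk1⟫ =
      ⟪lamk, C z - C zk1⟫ - ⟪h' zk, z - zk1⟫
      - ((k : ℝ) + 1) * γ * ⟪B yk1 + C zk1 - b, C z - C zk1⟫
      - ((k : ℝ) + 1) * ⟪Q (zk1 - zk), z - zk1⟫
      + ((k : ℝ) + 1) * γ * ⟪C (zk1 - zk), C z - C zk1⟫
      - Lh * ⟪zk1 - zk, z - zk1⟫ := by
    rw [hv_eq, hMd]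
    simp only [inner_sub_left, inner_add_left, real_inner_smul_left,
      ContinuousLinearMap.adjoint_inner_left]
    rw [map_sub C z zk1]
    ring
  have hhe : ⟪h' zk, z - zk1⟫ = ⟪h' zk, z - zk⟫ - ⟪h' zk, zk1 - zk⟫ := by
    rw [← inner_sub_right]; congr 1; abel
  -- lambda identities
  have hlk : lamk - lamk1 = (((k : ℝ) + 1) * γ) • (B yk1 + C zk1 - b) := by
    rw [hlam]; abel
  have hll : lam - lamk1 = (lam - lamk) + (((k : ℝ) + 1) * γ) • (B yk1 + C zk1 - b) := by
    rw [hlam]; abel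
  have e2 : ‖lamk - lamk1‖ ^ 2 = (((k : ℝ) + 1) * γ) ^ 2
      * ⟪B yk1 + C zk1 - b, B yk1 + C zk1 - b⟫ := by
    rw [hlk, norm_smul, Real.norm_eq_abs, mul_pow, sq_abs, real_inner_self_eq_norm_sq]
  have e1 : ‖lam - lamk1‖ ^ 2 = ‖lam - lamk‖ ^ 2
      + 2 * (((k : ℝ) + 1) * γ) * ⟪lam - lamk, B yk1 + C zk1 - b⟫
      + (((k : ℝ) + 1) * γ) ^ 2 * ⟪B yk1 + C zk1 - b, B yk1 + C zk1 - b⟫ := by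
    rw [hll, norm_add_sq_real, real_inner_smul_right, norm_smul, Real.norm_eq_abs, mul_pow,
      sq_abs, real_inner_self_eq_norm_sq]
    ring
  have e3 : ⟪lam - lamk, B yk1 + C zk1 - b⟫
      = ⟪lam, B yk1 + C zk1 - b⟫ - ⟪lamk, B yk1 + C zk1 - b⟫ := inner_sub_left _ _ _
  have hI1 : ⟪lamk, B yk1 + C zk1 - b⟫
      - ((k : ℝ) + 1) * γ * ⟪B yk1 + C zk1 - b, B yk1 + C zk1 - b⟫
      - ⟪lam, B yk1 + C zk1 - b⟫
      = 1 / (2 * γ * ((k : ℝ) + 1))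
        * (‖lam - lamk‖ ^ 2 - ‖lam - lamk1‖ ^ 2 - ‖lamk - lamk1‖ ^ 2) := by
    rw [e1, e2, e3]; field_simp; ring
  -- polarization identities
  have hI4 : ((k : ℝ) + 1)⁻¹ * ⟪P (yk1 - yk), y - yk1⟫ = 1 / (2 * ((k : ℝ) + 1))
      * (⟪yk - y, P (yk - y)⟫ - ⟪yk1 - y, P (yk1 - y)⟫ - ⟪yk1 - yk, P (yk1 - yk)⟫) := by
    rw [polar_op P hPsw yk1 yk y, one_div, mul_inv]; ring
  have hI5 : ((k : ℝ) + 1) * ⟪Q (zk1 - zk), z - zk1⟫ = ((k : ℝ) + 1)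
      * ((⟪zk - z, Q (zk - z)⟫ - ⟪zk1 - z, Q (zk1 - z)⟫ - ⟪zk1 - zk, Q (zk1 - zk)⟫) / 2) := by
    rw [polar_op Q hQsw zk1 zk z]
  have hI6 : Lh * ⟪zk1 - zk, z - zk1⟫
      = Lh * ((‖zk - z‖ ^ 2 - ‖zk1 - z‖ ^ 2 - ‖zk1 - zk‖ ^ 2) / 2) := by
    rw [polar_id zk1 zk z]
  -- the Young-type bound
  have hS : ((k : ℝ) + 1) * γ * ⟪C (zk1 - zk), B yk1 + C zk1 - b⟫
      ≤ ((k : ℝ) + 1) / 2 * ⟪zk1 - zk, Q (zk1 - zk)⟫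
        + 1 / (2 * η * γ * ((k : ℝ) + 1)) * ‖lamk - lamk1‖ ^ 2 := by
    have hcm : ⟪C (zk1 - zk), lamk - lamk1⟫
        = ((k : ℝ) + 1) * γ * ⟪C (zk1 - zk), B yk1 + C zk1 - b⟫ := by
      rw [hlk, real_inner_smul_right]
    have cauchy := real_inner_le_norm (C (zk1 - zk)) (lamk - lamk1)
    have young : ⟪C (zk1 - zk), lamk - lamk1⟫
        ≤ η * γ * ((k : ℝ) + 1) / 2 * ‖C (zk1 - zk)‖ ^ 2
          + 1 / (2 * η * γ * ((k : ℝ) + 1)) * ‖lamk - lamk1‖ ^ 2 := by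
      have hkey : η * γ * ((k : ℝ) + 1) / 2 * ‖C (zk1 - zk)‖ ^ 2
          + 1 / (2 * η * γ * ((k : ℝ) + 1)) * ‖lamk - lamk1‖ ^ 2
          - ⟪C (zk1 - zk), lamk - lamk1⟫
          = (1 / (2 * η * γ * ((k : ℝ) + 1)))
            * ((η * γ * ((k : ℝ) + 1) * ‖C (zk1 - zk)‖ - ‖lamk - lamk1‖) ^ 2
              + 2 * (η * γ * ((k : ℝ) + 1))
                * (‖C (zk1 - zk)‖ * ‖lamk - lamk1‖ - ⟪C (zk1 - zk), lamk - lamk1⟫)) := by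
        field_simp; ring
      have hnn : 0 ≤ (1 / (2 * η * γ * ((k : ℝ) + 1)))
          * ((η * γ * ((k : ℝ) + 1) * ‖C (zk1 - zk)‖ - ‖lamk - lamk1‖) ^ 2
            + 2 * (η * γ * ((k : ℝ) + 1))
              * (‖C (zk1 - zk)‖ * ‖lamk - lamk1‖ - ⟪C (zk1 - zk), lamk - lamk1⟫)) := by
        apply mul_nonneg (by positivity)
        have h1 : 0 ≤ ‖C (zk1 - zk)‖ * ‖lamk - lamk1‖ - ⟪C (zk1 - zk), lamk - lamk1⟫ := by
          linarith [cauchy]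
        have h2 : (0:ℝ) ≤ 2 * (η * γ * ((k : ℝ) + 1)) := by positivity
        nlinarith [sq_nonneg (η * γ * ((k : ℝ) + 1) * ‖C (zk1 - zk)‖ - ‖lamk - lamk1‖),
          mul_nonneg h2 h1]
      linarith [hkey, hnn]
    have hq := hQlow (zk1 - zk)
    have hqmul := mul_le_mul_of_nonneg_left hq
      (by positivity : (0:ℝ) ≤ ((k : ℝ) + 1) / 2)
    -- hqmul : κ/2 * (η*γ*‖C d‖^2) ≤ κ/2 * ⟪d, Q d⟫
    nlinarith [hcm, young, hqmul]
  -- coefficient bridge for the η-term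
  have hbr : (η - 1) / (2 * η * γ * ((k : ℝ) + 1)) * ‖lamk - lamk1‖ ^ 2
      = 1 / (2 * γ * ((k : ℝ) + 1)) * ‖lamk - lamk1‖ ^ 2
        - 1 / (2 * η * γ * ((k : ℝ) + 1)) * ‖lamk - lamk1‖ ^ 2 := by
    field_simp
  linarith [hfy, hgz, hhz, hdesc, hhe, hui, hvi, hI1, hI4, hI5, hI6, hS, hbr]
end
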